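/- arXiv:0909.0613 — 6 statements merged into one kernel-verified Lean document; each statement's English description precedes it below -/
import Mathlib

section
/- Let ρ, σ², λ ∈ ℝ with |ρ| < 1, σ² > 0 and λ > 0, and define the 3 × 3 real symmetric matrix I_∞ with entries: I_∞(1,1) = 1/(1−ρ²) + λ/(1−ρ)², I_∞(1,2) = I_∞(2,1) = λ/(2σ²(1−ρ)), I_∞(1,3) = I_∞(3,1) = 1/(2(1−ρ)), I_∞(2,2) = (2+λ)/(4(σ²)²), I_∞(2,3) = I_∞(3,2) = 1/(4σ²), and I_∞(3,3) = 1/(4λ). Then I_∞ is invertible and the (1,1) entry of its inverse equals 1 − ρ². -/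
open Matrix

/-- The `(1,1)` entry of the inverse of the limiting information matrix `I_∞(θ*)` in the
dynamic panel data model equals the Hahn–Kuersteiner bound `1 - ρ²`. -/
theorem panel_info_inverse_entry (ρ σ2 lam : ℝ) (hρ : |ρ| < 1) (hσ2 : 0 < σ2)
    (hlam : 0 < lam) (Iinf : Matrix (Fin 3) (Fin 3) ℝ)
    (hI : Iinf =
      !![1 / (1 - ρ ^ 2) + lam / (1 - ρ) ^ 2, lam / (2 * σ2 * (1 - ρ)), 1 / (2 * (1 - ρ));
         lam / (2 * σ2 * (1 - ρ)), (2 + lam) / (4 * σ2 ^ 2), 1 / (4 * σ2);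
         1 / (2 * (1 - ρ)), 1 / (4 * σ2), 1 / (4 * lam)]) :
    IsUnit Iinf ∧ Iinf⁻¹ 0 0 = 1 - ρ ^ 2 := by
  have h1 : (1 : ℝ) - ρ ≠ 0 := by
    have := abs_lt.mp hρ; linarith [this.2]
  have h2 : (1 : ℝ) + ρ ≠ 0 := by
    have := abs_lt.mp hρ; linarith [this.1]
  have h3 : (1 : ℝ) - ρ ^ 2 ≠ 0 := by
    intro h; apply h1
    have : (1 - ρ) * (1 + ρ) = 0 := by ring_nf; linarith [h]
    rcases mul_eq_zero.mp this with h' | h'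
    · exact h'
    · exact absurd h' h2
  have hσ : σ2 ≠ 0 := ne_of_gt hσ2
  have hl : lam ≠ 0 := ne_of_gt hlam
  have hdet : Iinf.det = 1 / (8 * σ2 ^ 2 * lam * (1 - ρ ^ 2)) := by
    rw [hI, det_fin_three]
    simp only [of_apply, cons_val', cons_val_zero, cons_val_one, cons_val_two, empty_val', cons_val_fin_one, head_cons, head_fin_const, tail_cons]
    have : (1 : ℝ) - ρ ^ 2 = (1 - ρ) * (1 + ρ) := by ring
    field_simp
    ring
  have hdne : Iinf.det ≠ 0 := by
    rw [hdet]
    positivity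
  have hunit : IsUnit Iinf := (Matrix.isUnit_iff_isUnit_det _).mpr (isUnit_iff_ne_zero.mpr hdne)
  refine ⟨hunit, ?_⟩
  rw [Matrix.inv_def, Matrix.smul_apply, smul_eq_mul, hdet]
  have hadj : Iinf.adjugate 0 0 = 1 / (8 * σ2 ^ 2 * lam) := by
    rw [hI, adjugate_fin_three]
    simp only [of_apply, cons_val', cons_val_zero, cons_val_one, cons_val_two, empty_val', cons_val_fin_one, head_cons, head_fin_const, tail_cons]
    field_simp
    ring
  rw [hadj]
  rw [Ring.inverse_eq_inv']
  field_simp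
end

section
/- Let Σ be a symmetric positive definite 2 × 2 real matrix, β* ∈ ℝ, λ* > 0 and α ≥ 0. Write a* = (β*, 1)ᵀ, b = (1, −β*)ᵀ, e₁ = (1, 0)ᵀ, q = a*ᵀΣ⁻¹a*, r = a*ᵀΣ⁻¹e₁, s = e₁ᵀΣ⁻¹e₁, σ_u² = bᵀΣb, and define the 2 × 2 symmetric matrix I_α with entries I_α(1,1) = λ*² · (q·s·(α + 2λ*q) + α·r²) / ((α + λ*q)(α + 2λ*q)), I_α(1,2) = I_α(2,1) = λ* · r · q / (α + 2λ*q), and I_α(2,2) = q² / (2(α + 2λ*q)). Then I_α is invertible and the (1,1) entry of its inverse equals (σ_u²/λ*²) · (λ* + α/q). -/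
open Matrix

/-- The `(1,1)` entry of the inverse of the limiting information matrix `I_α(θ*)` in the
IV model equals `(σ_u²/λ*²)(λ* + α/q)`, the asymptotic variance of LIMLK. -/
theorem iv_info_inverse_entry (S : Matrix (Fin 2) (Fin 2) ℝ) (hS : S.PosDef)
    (βs lams α : ℝ) (hlams : 0 < lams) (hα : 0 ≤ α)
    (q r s σu2 : ℝ)
    (hq : q = ![βs, 1] ⬝ᵥ S⁻¹.mulVec ![βs, 1])
    (hr : r = ![βs, 1] ⬝ᵥ S⁻¹.mulVec ![(1 : ℝ), 0])
    (hs : s = ![(1 : ℝ), 0] ⬝ᵥ S⁻¹.mulVec ![(1 : ℝ), 0])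
    (hσu2 : σu2 = ![(1 : ℝ), -βs] ⬝ᵥ S.mulVec ![(1 : ℝ), -βs])
    (Iα : Matrix (Fin 2) (Fin 2) ℝ)
    (hI : Iα =
      !![lams ^ 2 * (q * s * (α + 2 * lams * q) + α * r ^ 2) /
           ((α + lams * q) * (α + 2 * lams * q)),
         lams * r * q / (α + 2 * lams * q);
         lams * r * q / (α + 2 * lams * q),
         q ^ 2 / (2 * (α + 2 * lams * q))]) :
    IsUnit Iα ∧ Iα⁻¹ 0 0 = σu2 / lams ^ 2 * (lams + α / q) := by
  have hd : 0 < S.det := hS.det_pos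
  have hd0 : S.det ≠ 0 := ne_of_gt hd
  have hsym : S 1 0 = S 0 1 := by simpa using hS.isHermitian.apply 0 1
  have hinv : S⁻¹ = (S.det)⁻¹ • !![S 1 1, -(S 0 1); -(S 1 0), S 0 0] := by
    rw [inv_def, adjugate_fin_two, Ring.inverse_eq_inv']
  have hdet2 : S.det = S 0 0 * S 1 1 - S 0 1 * S 1 0 := det_fin_two S
  -- positivity of q
  have hq0 : 0 < q := by
    rw [hq]
    have h := hS.inv.dotProduct_mulVec_pos (x := ![βs, 1]) (by simp [funext_iff, Fin.forall_fin_two])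
    simpa using h
  -- scalar forms
  have hqe : q = (S.det)⁻¹ * (βs ^ 2 * S 1 1 - 2 * βs * S 0 1 + S 0 0) := by
    rw [hq, hinv]
    simp [mulVec, dotProduct, Fin.sum_univ_two, hsym]
    ring
  have hre : r = (S.det)⁻¹ * (βs * S 1 1 - S 0 1) := by
    rw [hr, hinv]
    simp [mulVec, dotProduct, Fin.sum_univ_two, hsym]
    ring
  have hse : s = (S.det)⁻¹ * S 1 1 := by
    rw [hs, hinv]
    simp [mulVec, dotProduct, Fin.sum_univ_two]
  have hσe : σu2 = S 0 0 - 2 * βs * S 0 1 + βs ^ 2 * S 1 1 := by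
    rw [hσu2]
    simp [mulVec, dotProduct, Fin.sum_univ_two, hsym]
    ring
  -- key identities
  have h1 : σu2 = S.det * q := by
    rw [hσe, hqe]; field_simp; ring
  have h2 : q * s - r ^ 2 = (S.det)⁻¹ := by
    rw [hqe, hre, hse]
    field_simp
    rw [hdet2, hsym]
    ring
  set A := α + lams * q with hA
  set B := α + 2 * lams * q with hB
  have hA0 : 0 < A := by positivity
  have hB0 : 0 < B := by positivity
  have hdetI : Iα.det = lams ^ 2 * q ^ 2 * (S.det)⁻¹ / (2 * A * B) := by
    rw [hI, det_fin_two_of, ← h2]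
    field_simp
    ring
  have hdetI0 : Iα.det ≠ 0 := by
    rw [hdetI]; positivity
  refine ⟨(Matrix.isUnit_iff_isUnit_det Iα).2 (isUnit_iff_ne_zero.2 hdetI0), ?_⟩
  have hi : Iα⁻¹ 0 0 = (Iα.det)⁻¹ * Iα 1 1 := by
    rw [inv_def, adjugate_fin_two, Ring.inverse_eq_inv']
    simp
  rw [hi, hdetI, hI, h1]
  have hq0' : q ≠ 0 := ne_of_gt hq0
  simp only [Matrix.of_apply, Matrix.cons_val_one, Matrix.head_cons, Matrix.cons_val_zero]
  field_simp
  ring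
end

section
/- Let Σ be a symmetric positive definite 2 × 2 real matrix, β* ∈ ℝ and λ* > 0, and write a(β) = (β, 1)ᵀ and a* = a(β*). Define Q̄ : ℝ × [0, ∞) → ℝ by Q̄(β, λ) = −(1/2)·λ·a(β)ᵀΣ⁻¹a(β) + √λ·√λ*·a*ᵀΣ⁻¹a(β). Then Q̄ attains its maximum over ℝ × [0,∞) at (β*, λ*), with maximal value (1/2)·λ*·a*ᵀΣ⁻¹a*, and (β*, λ*) is the unique maximizer: Q̄(β, λ) < Q̄(β*, λ*) for every (β, λ) ≠ (β*, λ*) with λ ≥ 0. -/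
open Matrix

/-- The limiting objective function of the invariant likelihood in the IV model under
strong-instrument asymptotics is uniquely maximized over `ℝ × [0, ∞)` at the true
parameter `(β*, λ*)`, with maximal value `(1/2)·λ*·a*ᵀΣ⁻¹a*`. -/
theorem iv_limit_objective_unique_max (S : Matrix (Fin 2) (Fin 2) ℝ) (hS : S.PosDef)
    (βs lams : ℝ) (hlams : 0 < lams)
    (Qbar : ℝ → ℝ → ℝ)
    (hQ : ∀ β lam, Qbar β lam =
      -(1 / 2) * lam * (![β, 1] ⬝ᵥ S⁻¹.mulVec ![β, 1]) +
        Real.sqrt lam * Real.sqrt lams * (![βs, 1] ⬝ᵥ S⁻¹.mulVec ![β, 1])) :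
    Qbar βs lams = 1 / 2 * lams * (![βs, 1] ⬝ᵥ S⁻¹.mulVec ![βs, 1]) ∧
      ∀ β lam, 0 ≤ lam → (β, lam) ≠ (βs, lams) → Qbar β lam < Qbar βs lams := by
  have hM : (S⁻¹).PosDef := hS.inv
  set M := S⁻¹ with hMdef
  have hsym : M 1 0 = M 0 1 := by
    have := hM.isHermitian
    have h := congrFun (congrFun this 0) 1
    simpa [Matrix.conjTranspose_apply] using h
  have hTs : Real.sqrt lams * Real.sqrt lams = lams :=
    Real.mul_self_sqrt hlams.le
  constructor
  · rw [hQ]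
    rw [hTs]
    ring
  · intro β lam hlam hne
    rw [hQ, hQ, hTs]
    set t := Real.sqrt lam with htdef
    set T := Real.sqrt lams with hTdef
    have ht2 : t * t = lam := Real.mul_self_sqrt hlam
    have hT2 : T * T = lams := Real.mul_self_sqrt hlams.le
    have hTpos : 0 < T := Real.sqrt_pos.mpr hlams
    have htnn : 0 ≤ t := Real.sqrt_nonneg _
    set u := t - T with hudef
    set v := t * (β - βs) with hvdef
    have hz : ¬ (u = 0 ∧ v = 0) := by
      rintro ⟨hu, hv⟩
      have htT : t = T := by linarith
      have hlameq : lam = lams := by rw [← ht2, ← hT2, htT]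
      have hd : β - βs = 0 := by
        have htpos : 0 < t := htT ▸ hTpos
        rcases mul_eq_zero.mp hv with h | h
        · exact absurd h htpos.ne'
        · exact h
      exact hne (Prod.ext (by linarith) hlameq)
    have hzne : (![u * βs + v, u] : Fin 2 → ℝ) ≠ 0 := by
      intro h
      have h0 : u * βs + v = 0 := congrFun h 0
      have h1 : u = 0 := congrFun h 1
      exact hz ⟨h1, by simpa [h1] using h0⟩
    have hpos := hM.dotProduct_mulVec_pos hzne
    simp only [dotProduct, mulVec, Fin.sum_univ_two, Matrix.cons_val_zero,
      Matrix.cons_val_one, Matrix.head_cons, Pi.star_apply, star_trivial] at hpos ⊢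
    rw [← ht2, ← hT2, hsym] at *
    rw [hudef, hvdef] at hpos
    nlinarith [hpos]
end

section
/- Let Σ be a symmetric positive definite 2 × 2 real matrix, β* ∈ ℝ, λ* > 0 and α > 0. Write a(β) = (β, 1)ᵀ, a* = a(β*), q(β) = a(β)ᵀΣ⁻¹a(β), p(β) = a*ᵀΣ⁻¹a(β), and define Q̄ : ℝ × (0, ∞) → ℝ by Q̄(β, λ) = −(1/2)·λ·q(β) + (α/2)·(1 + Z(β,λ)²/α²)^{1/2} − (α/2)·ln(1 + (1 + Z(β,λ)²/α²)^{1/2}), where Z(β,λ)² = 4λ·(α·q(β) + λ*·p(β)²). Then Q̄ is differentiable at (β*, λ*) and both partial derivatives of Q̄ vanish there: ∂Q̄/∂β (β*, λ*) = 0 and ∂Q̄/∂λ (β*, λ*) = 0. -/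
open Matrix

/-- The limiting objective function of the invariant likelihood in the IV model under
many-weak-instrument asymptotics `K/N → α > 0` is differentiable at the true parameter
`(β*, λ*)` and both of its partial derivatives vanish there (first-order conditions). -/
theorem iv_mwiv_limit_objective_foc (S : Matrix (Fin 2) (Fin 2) ℝ) (hS : S.PosDef)
    (βs lams α : ℝ) (hlams : 0 < lams) (hα : 0 < α)
    (Qbar : ℝ → ℝ → ℝ)
    (hQ : ∀ β lam, 0 < lam → Qbar β lam =
      -(1 / 2) * lam * (![β, 1] ⬝ᵥ S⁻¹.mulVec ![β, 1]) +
        α / 2 * Real.sqrt (1 +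
          4 * lam * (α * (![β, 1] ⬝ᵥ S⁻¹.mulVec ![β, 1]) +
            lams * (![βs, 1] ⬝ᵥ S⁻¹.mulVec ![β, 1]) ^ 2) / α ^ 2) -
        α / 2 * Real.log (1 + Real.sqrt (1 +
          4 * lam * (α * (![β, 1] ⬝ᵥ S⁻¹.mulVec ![β, 1]) +
            lams * (![βs, 1] ⬝ᵥ S⁻¹.mulVec ![β, 1]) ^ 2) / α ^ 2))) :
    HasFDerivAt (fun p : ℝ × ℝ => Qbar p.1 p.2)
      (0 : ℝ × ℝ →L[ℝ] ℝ) (βs, lams) := by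
  set m00 := S⁻¹ 0 0 with hm00
  set m01 := S⁻¹ 0 1 with hm01
  set m11 := S⁻¹ 1 1 with hm11
  have h10 : S⁻¹ 1 0 = m01 := by
    have := hS.inv.1.apply 0 1
    simpa using this
  have hdot : ∀ b : ℝ, (![b, 1] ⬝ᵥ S⁻¹.mulVec ![b, 1]) =
      m00 * b ^ 2 + 2 * m01 * b + m11 := by
    intro b
    simp [Matrix.mulVec, dotProduct, Fin.sum_univ_two, h10, hm00, hm01, hm11]
    ring
  set pd := m00 * βs + m01 with hpd
  set c0 := m01 * βs + m11 with hc0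
  have hpdot : ∀ b : ℝ, (![βs, 1] ⬝ᵥ S⁻¹.mulVec ![b, 1]) = pd * b + c0 := by
    intro b
    simp [Matrix.mulVec, dotProduct, Fin.sum_univ_two, h10, hm00, hm01, hm11, hpd, hc0]
    ring
  set qs := m00 * βs ^ 2 + 2 * m01 * βs + m11 with hqsdef
  have hqs : 0 < qs := by
    have h := hS.inv.dotProduct_mulVec_pos (show ![βs, (1:ℝ)] ≠ 0 from by
      intro h
      have := congrFun h 1
      simp at this)
    rw [show star ![βs, (1:ℝ)] = ![βs, 1] by simp, hdot βs] at h
    exact h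
  -- the smooth model function
  set F : ℝ × ℝ → ℝ := fun x =>
    -(1 / 2) * (x.2 * (m00 * x.1 ^ 2 + 2 * m01 * x.1 + m11)) +
      α / 2 * Real.sqrt (1 + (α ^ 2)⁻¹ * (4 * x.2 *
        (α * (m00 * x.1 ^ 2 + 2 * m01 * x.1 + m11) +
          lams * ((pd * x.1 + c0) * (pd * x.1 + c0))))) -
      α / 2 * Real.log (1 + Real.sqrt (1 + (α ^ 2)⁻¹ * (4 * x.2 *
        (α * (m00 * x.1 ^ 2 + 2 * m01 * x.1 + m11) +
          lams * ((pd * x.1 + c0) * (pd * x.1 + c0)))))) with hF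
  have hev : (fun p : ℝ × ℝ => Qbar p.1 p.2) =ᶠ[nhds (βs, lams)] F := by
    have hpos : ∀ᶠ x : ℝ × ℝ in nhds (βs, lams), 0 < x.2 :=
      (continuous_snd.tendsto _).eventually (eventually_gt_nhds hlams)
    filter_upwards [hpos] with x hx
    rw [hQ x.1 x.2 hx, hF]
    rw [hdot x.1, hpdot x.1]
    ring_nf
  refine HasFDerivAt.congr_of_eventuallyEq ?_ hev
  -- key algebraic identity for the sqrt at the point
  have key : (1:ℝ) + (α ^ 2)⁻¹ * (4 * lams * (α * (m00 * βs ^ 2 + 2 * m01 * βs + m11) +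
      lams * ((pd * βs + c0) * (pd * βs + c0)))) =
      ((α + 2 * lams * qs) / α) ^ 2 := by
    have h1 : pd * βs + c0 = qs := by rw [hpd, hc0, hqsdef]; ring
    rw [h1, ← hqsdef]
    field_simp
    ring
  have hspos : (0:ℝ) < (α + 2 * lams * qs) / α := by positivity
  have hsq : Real.sqrt (1 + (α ^ 2)⁻¹ * (4 * lams * (α * (m00 * βs ^ 2 + 2 * m01 * βs + m11) +
      lams * ((pd * βs + c0) * (pd * βs + c0))))) = (α + 2 * lams * qs) / α := by
    rw [key]; exact Real.sqrt_sq hspos.le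
  -- build the derivative of F
  have hQ1 : HasDerivAt (fun b : ℝ => m00 * b ^ 2 + 2 * m01 * b + m11)
      (2 * m00 * βs + 2 * m01) βs := by
    have h := (((hasDerivAt_pow 2 βs).const_mul m00).add
      ((hasDerivAt_id' (x := βs)).const_mul (2 * m01))).add_const m11
    refine h.congr_deriv ?_
    push_cast
    ring
  have hQF : HasFDerivAt (fun x : ℝ × ℝ => m00 * x.1 ^ 2 + 2 * m01 * x.1 + m11)
      ((2 * m00 * βs + 2 * m01) • ContinuousLinearMap.fst ℝ ℝ ℝ) (βs, lams) :=
    by have := hQ1.comp_hasFDerivAt (βs, lams) (hasFDerivAt_fst (𝕜 := ℝ) (p := ((βs, lams) : ℝ × ℝ))); exact this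
  have hPF : HasFDerivAt (fun x : ℝ × ℝ => pd * x.1 + c0)
      (pd • ContinuousLinearMap.fst ℝ ℝ ℝ) (βs, lams) :=
    ((hasFDerivAt_fst (p := ((βs, lams) : ℝ × ℝ))).const_mul pd).add_const c0
  have hPP := hPF.mul hPF
  have hInner := (hQF.const_mul α).add (hPP.const_mul lams)
  have hsndF : HasFDerivAt (fun x : ℝ × ℝ => x.2) (ContinuousLinearMap.snd ℝ ℝ ℝ) (βs, lams) :=
    hasFDerivAt_snd
  have hprod := (hsndF.const_mul (4:ℝ)).mul hInner
  have hu := (hprod.const_mul ((α ^ 2)⁻¹ : ℝ)).const_add (1:ℝ)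
  have hune : (1:ℝ) + (α ^ 2)⁻¹ * (4 * ((βs, lams) : ℝ × ℝ).2 *
      (α * (m00 * ((βs, lams) : ℝ × ℝ).1 ^ 2 + 2 * m01 * ((βs, lams) : ℝ × ℝ).1 + m11) +
        lams * ((pd * ((βs, lams) : ℝ × ℝ).1 + c0) * (pd * ((βs, lams) : ℝ × ℝ).1 + c0)))) ≠ 0 := by
    show (1:ℝ) + (α ^ 2)⁻¹ * (4 * lams * (α * (m00 * βs ^ 2 + 2 * m01 * βs + m11) +
      lams * ((pd * βs + c0) * (pd * βs + c0)))) ≠ 0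
    rw [key]
    positivity
  have hsqF := hu.sqrt hune
  have hlne : (1:ℝ) + Real.sqrt (1 + (α ^ 2)⁻¹ * (4 * ((βs, lams) : ℝ × ℝ).2 *
      (α * (m00 * ((βs, lams) : ℝ × ℝ).1 ^ 2 + 2 * m01 * ((βs, lams) : ℝ × ℝ).1 + m11) +
        lams * ((pd * ((βs, lams) : ℝ × ℝ).1 + c0) * (pd * ((βs, lams) : ℝ × ℝ).1 + c0))))) ≠ 0 := by
    show (1:ℝ) + Real.sqrt (1 + (α ^ 2)⁻¹ * (4 * lams * (α * (m00 * βs ^ 2 + 2 * m01 * βs + m11) +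
      lams * ((pd * βs + c0) * (pd * βs + c0))))) ≠ 0
    rw [hsq]
    positivity
  have hlogF := (hsqF.const_add (1:ℝ)).log hlne
  have hfirst := (hsndF.mul hQF).const_mul (-(1/2) : ℝ)
  have hFd := (hfirst.add (hsqF.const_mul (α / 2))).sub (hlogF.const_mul (α / 2))
  refine hFd.congr_fderiv ?_
  -- show the derivative is zero
  refine ContinuousLinearMap.ext fun v => ?_
  simp only [ContinuousLinearMap.add_apply, ContinuousLinearMap.sub_apply,
    ContinuousLinearMap.smul_apply, ContinuousLinearMap.coe_fst', ContinuousLinearMap.coe_snd',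
    ContinuousLinearMap.zero_apply, smul_eq_mul, Pi.add_apply, Pi.mul_apply]
  rw [hsq]
  have h1 : pd * βs + c0 = qs := by rw [hpd, hc0, hqsdef]; ring
  have h2 : m00 * βs ^ 2 + 2 * m01 * βs + m11 = qs := hqsdef.symm
  rw [h1, h2]
  have hαne : α ≠ 0 := hα.ne'
  have hden : α + 2 * lams * qs ≠ 0 := by positivity
  have hden2 : α + (α + 2 * lams * qs) ≠ 0 := by positivity
  field_simp
  ring
end

section
/- Let T ≥ 2 and for ρ ∈ ℝ let B(ρ) be the T × T lower-triangular matrix with (i,j) entry ρ^{i−j} for i ≥ j and 0 for i < j. Let ρ, ρ* ∈ ℝ, σ², σ*² > 0 and λ, λ* ≥ 0. Then σ² · B(ρ)(I_T + λ·1_T 1_Tᵀ)B(ρ)ᵀ = σ*² · B(ρ*)(I_T + λ*·1_T 1_Tᵀ)B(ρ*)ᵀ (equality of T × T matrices) if and only if ρ = ρ*, σ² = σ*² and λ = λ*. -/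
open Matrix

private lemma entry_formula (T : ℕ) (A : Matrix (Fin T) (Fin T) ℝ) (σ2 lam : ℝ) (i j : Fin T) :
    ((σ2 • (A * (1 + lam • vecMulVec (fun _ => (1 : ℝ)) (fun _ => (1 : ℝ))) * Aᵀ) :
        Matrix (Fin T) (Fin T) ℝ)) i j
      = σ2 * ((∑ k, A i k * A j k) + lam * (∑ k, A i k) * (∑ k, A j k)) := by
  simp [mul_apply, transpose_apply, Matrix.add_apply, one_apply, vecMulVec_apply, mul_add, add_mul,
    Finset.sum_add_distrib, mul_ite, Finset.mul_sum, Finset.sum_mul]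
  refine Finset.sum_congr rfl fun x _ => Finset.sum_congr rfl fun y _ => by ring

/-- Moment identification in the dynamic panel data model: the mean
`σ²·B(ρ)(I_T + λ·1_T1_Tᵀ)B(ρ)ᵀ` of the maximal invariant determines `(ρ, σ², λ)`. -/
theorem panel_moment_identification (T : ℕ) (hT : 2 ≤ T)
    (B : ℝ → Matrix (Fin T) (Fin T) ℝ)
    (hB : ∀ (ρ : ℝ) (i j : Fin T), B ρ i j =
      if (j : ℕ) ≤ (i : ℕ) then ρ ^ ((i : ℕ) - (j : ℕ)) else 0)
    (ρ ρs σ2 σ2s lam lams : ℝ) (hσ2 : 0 < σ2) (hσ2s : 0 < σ2s)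
    (hlam : 0 ≤ lam) (hlams : 0 ≤ lams) :
    σ2 • (B ρ * (1 + lam • vecMulVec (fun _ => (1 : ℝ)) (fun _ => (1 : ℝ))) * (B ρ)ᵀ) =
      σ2s • (B ρs * (1 + lams • vecMulVec (fun _ => (1 : ℝ)) (fun _ => (1 : ℝ))) * (B ρs)ᵀ) ↔
      ρ = ρs ∧ σ2 = σ2s ∧ lam = lams := by
  constructor
  · intro h
    set i0 : Fin T := ⟨0, by omega⟩ with hi0
    set i1 : Fin T := ⟨1, by omega⟩ with hi1
    have hne01 : i0 ≠ i1 := by simp [hi0, hi1, Fin.ext_iff]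
    have hrow0 : ∀ (r : ℝ) (k : Fin T), B r i0 k = if k = i0 then 1 else 0 := by
      intro r k
      rw [hB]
      by_cases hk : k = i0
      · subst hk; simp
      · have : ¬ ((k : ℕ) ≤ (i0 : ℕ)) := by
          simp only [Fin.ext_iff] at hk; simp [hi0] at hk ⊢; omega
        simp [this, hk]
    have hrow1 : ∀ (r : ℝ) (k : Fin T), B r i1 k =
        if k = i0 then r else if k = i1 then 1 else 0 := by
      intro r k
      rw [hB]
      by_cases hk0 : k = i0
      · subst hk0; simp [hi0, hi1]
      · by_cases hk1 : k = i1
        · subst hk1; simp [(Ne.symm hne01 : i1 ≠ i0)]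
        · have : ¬ ((k : ℕ) ≤ (i1 : ℕ)) := by
            simp only [Fin.ext_iff] at hk0 hk1; simp [hi0, hi1] at hk0 hk1 ⊢; omega
          simp [this, hk0, hk1]
    have S0 : ∀ r : ℝ, (∑ k, B r i0 k) = 1 := by
      intro r; simp [hrow0]
    have S1 : ∀ r : ℝ, (∑ k, B r i1 k) = r + 1 := by
      intro r
      rw [Fintype.sum_eq_add i0 i1 hne01 (fun c hc => by simp [hrow1, hc.1, hc.2])]
      simp [hrow1, Ne.symm hne01]
    have P00 : ∀ r : ℝ, (∑ k, B r i0 k * B r i0 k) = 1 := by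
      intro r
      rw [Fintype.sum_eq_single i0 (fun c hc => by simp [hrow0, hc])]
      simp [hrow0]
    have P10 : ∀ r : ℝ, (∑ k, B r i1 k * B r i0 k) = r := by
      intro r
      rw [Fintype.sum_eq_single i0 (fun c hc => by simp [hrow0, hc])]
      simp [hrow0, hrow1]
    have P11 : ∀ r : ℝ, (∑ k, B r i1 k * B r i1 k) = r * r + 1 := by
      intro r
      rw [Fintype.sum_eq_add i0 i1 hne01 (fun c hc => by simp [hrow1, hc.1, hc.2])]
      simp [hrow1, Ne.symm hne01]
    have h00 := congrFun (congrFun h i0) i0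
    have h10 := congrFun (congrFun h i1) i0
    have h11 := congrFun (congrFun h i1) i1
    rw [entry_formula, entry_formula] at h00 h10 h11
    rw [S0 ρ, S0 ρs, P00 ρ, P00 ρs] at h00
    rw [S0 ρ, S0 ρs, S1 ρ, S1 ρs, P10 ρ, P10 ρs] at h10
    rw [S1 ρ, S1 ρs, P11 ρ, P11 ρs] at h11
    -- h00 : σ2 * (1 + lam * 1 * 1) = σ2s * (1 + lams * 1 * 1)
    -- h10 : σ2 * (ρ + lam * (ρ+1) * 1) = ...
    -- h11 : σ2 * (ρ*ρ+1 + lam*(ρ+1)*(ρ+1)) = ...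
    have key1 : (ρ - ρs) * (σ2 * (1 + lam) * (ρ - ρs) + 2 * (σ2 * lam)) = 0 := by
      linear_combination h11 - (2 * ρs) * h10 + (ρs ^ 2 - 1) * h00
    have key2 : (ρs - ρ) * (σ2s * (1 + lams) * (ρs - ρ) + 2 * (σ2s * lams)) = 0 := by
      linear_combination (-1 : ℝ) * h11 + (2 * ρ) * h10 + (1 - ρ ^ 2) * h00
    have hρ : ρ = ρs := by
      by_contra hne
      have hd : ρ - ρs ≠ 0 := sub_ne_zero.mpr hne
      have f1 := (mul_eq_zero.mp key1).resolve_left hd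
      have f2 := (mul_eq_zero.mp key2).resolve_left (sub_ne_zero.mpr (Ne.symm hne))
      have hq : 0 ≤ σ2 * lam := mul_nonneg hσ2.le hlam
      have hqs : 0 ≤ σ2s * lams := mul_nonneg hσ2s.le hlams
      have ha : 0 < σ2 * (1 + lam) := mul_pos hσ2 (by linarith)
      have has : 0 < σ2s * (1 + lams) := mul_pos hσ2s (by linarith)
      have hd1 : ρ - ρs ≤ 0 := by nlinarith
      have hd2 : ρs - ρ ≤ 0 := by nlinarith
      exact hd (by linarith)
    subst hρ
    have hq : σ2 * lam = σ2s * lams := by linear_combination h10 - ρ * h00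
    have hs : σ2 = σ2s := by linear_combination h00 - hq
    refine ⟨rfl, hs, ?_⟩
    have : σ2 * lam = σ2 * lams := by rw [hq, hs]
    exact mul_left_cancel₀ hσ2.ne' this
  · rintro ⟨rfl, rfl, rfl⟩
    rfl
end

section
/- Fix an integer T ≥ 1. For N > T define c_N = (1/(NT)) · ln( 2^{(N−2)/2} · N^{NT/2 − (N−2)/2} / ( 2^{NT/2 − (N−2)/2} · π^{T(T−1)/4} · ∏_{t=1}^{T−1} Γ((N − t)/2) ) ), where Γ denotes the Gamma function and the product over t is empty (equal to 1) when T = 1. Then c_N → ln(2)/(2T) + (T−1)/(2T) as N → ∞. -/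
open Filter Real Nat

noncomputable def aaux (n : ℕ) : ℝ := Real.log (n !) / n - Real.log n + 1

lemma aaux_tendsto : Tendsto aaux atTop (nhds 0) := by
  have hs := Stirling.tendsto_stirlingSeq_sqrt_pi
  have hlog : Tendsto (fun n => Real.log (Stirling.stirlingSeq n)) atTop
      (nhds (Real.log (Real.sqrt π))) :=
    hs.log (by positivity)
  have h1 : Tendsto (fun n : ℕ => Real.log (Stirling.stirlingSeq n) / n) atTop (nhds 0) :=
    hlog.div_atTop tendsto_natCast_atTop_atTop
  have h2 : Tendsto (fun n : ℕ => Real.log (2 * n) / (2 * n)) atTop (nhds 0) := by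
    have := Real.isLittleO_log_id_atTop.tendsto_div_nhds_zero
    exact this.comp ((tendsto_natCast_atTop_atTop (R := ℝ)).const_mul_atTop (by norm_num))
  have h3 := h1.add h2
  rw [add_zero] at h3
  apply h3.congr'
  filter_upwards [eventually_ge_atTop 1] with n hn
  have hn0 : (0:ℝ) < n := by exact_mod_cast hn
  have hfac : (0:ℝ) < (n ! : ℝ) := by exact_mod_cast n.factorial_pos
  have hstir : Stirling.stirlingSeq n = (n !) / (Real.sqrt (2 * n) * (n / Real.exp 1) ^ n) :=
    rfl
  have hpos : (0:ℝ) < Real.sqrt (2 * n) * (n / Real.exp 1) ^ n := by positivity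
  have hls : Real.log (Stirling.stirlingSeq n)
      = Real.log (n !) - (Real.log (2 * n) / 2 + n * (Real.log n - 1)) := by
    rw [hstir, Real.log_div hfac.ne' hpos.ne', Real.log_mul (by positivity) (by positivity),
      Real.log_pow, Real.log_div hn0.ne' (Real.exp_pos 1).ne', Real.log_exp,
      Real.log_sqrt (by positivity)]
    try ring
  rw [hls]
  unfold aaux
  field_simp
  ring


lemma log_fact (n : ℕ) (hn : 1 ≤ n) :
    Real.log (n !) = n * aaux n + n * Real.log n - n := by
  have hn0 : ((n:ℝ)) ≠ 0 := by positivity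
  unfold aaux; field_simp; ring

lemma mono_xlogx {a b : ℝ} (ha : Real.exp 1 ≤ a) (hab : a ≤ b) :
    a * Real.log a - a ≤ b * Real.log b - b := by
  have ha0 : (0:ℝ) < a := lt_of_lt_of_le (Real.exp_pos 1) ha
  have hla : 1 ≤ Real.log a := (Real.le_log_iff_exp_le ha0).2 ha
  have hlb : Real.log a ≤ Real.log b := Real.log_le_log ha0 hab
  nlinarith [mul_le_mul_of_nonneg_left hlb (le_trans ha0.le hab)]

lemma exp_one_le_three : Real.exp 1 ≤ 3 :=
  Real.exp_one_lt_d9.le.trans (by norm_num)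

lemma bound_setup (y : ℝ) (hy : 3 ≤ y) :
    ∃ n : ℕ, 3 ≤ n ∧ (n : ℝ) ≤ y ∧ y < n + 1 ∧ 0 < y ∧
      (-( |aaux (⌊y⌋₊ - 1)| + 2 * Real.log ((⌊y⌋₊ : ℝ) + 1) / ⌊y⌋₊)
          ≤ Real.log (Real.Gamma y) / y - Real.log y + 1 ∧
        Real.log (Real.Gamma y) / y - Real.log y + 1 ≤ |aaux ⌊y⌋₊|) := by
  have hy0 : (0:ℝ) < y := by linarith
  set n := ⌊y⌋₊ with hn
  have hn3 : 3 ≤ n := by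
    have h33 : ((3:ℕ):ℝ) ≤ y := by push_cast; linarith
    exact Nat.le_floor h33
  have hny : (n : ℝ) ≤ y := Nat.floor_le hy0.le
  have hyn : y < n + 1 := Nat.lt_floor_add_one y
  have hn0 : (0:ℝ) < n := by exact_mod_cast Nat.lt_of_lt_of_le (by norm_num) hn3
  have hn3R : (3:ℝ) ≤ n := by exact_mod_cast hn3
  have hΓy : (0:ℝ) < Real.Gamma y := Real.Gamma_pos_of_pos hy0
  have hmono := Real.Gamma_strictMonoOn_Ici.monotoneOn
  have hrepr : Real.log (Real.Gamma y) / y - Real.log y + 1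
      = (Real.log (Real.Gamma y) - (y * Real.log y - y)) / y := by
    field_simp; ring
  have he3 : Real.exp 1 ≤ (n:ℝ) := exp_one_le_three.trans hn3R
  have hey : Real.exp 1 ≤ y := exp_one_le_three.trans hy
  -- upper bound
  have hub : Real.log (Real.Gamma y) / y - Real.log y + 1 ≤ |aaux n| := by
    have hΓu : Real.Gamma y ≤ Real.Gamma ((n:ℝ) + 1) := by
      refine hmono ?_ ?_ hyn.le
      · exact Set.mem_Ici.2 (by linarith)
      · exact Set.mem_Ici.2 (by linarith)
    rw [Real.Gamma_nat_eq_factorial] at hΓu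
    have hlogu : Real.log (Real.Gamma y) ≤ Real.log (n !) :=
      Real.log_le_log hΓy hΓu
    have hx1 : (n:ℝ) * Real.log n - n ≤ y * Real.log y - y := mono_xlogx he3 hny
    have hfn : Real.log (n !) = n * aaux n + n * Real.log n - n :=
      log_fact n (by omega)
    have hnum : Real.log (Real.Gamma y) - (y * Real.log y - y) ≤ y * |aaux n| := by
      have h1 : (n:ℝ) * aaux n ≤ (n:ℝ) * |aaux n| :=
        mul_le_mul_of_nonneg_left (le_abs_self _) hn0.le
      have h2 : (n:ℝ) * |aaux n| ≤ y * |aaux n| :=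
        mul_le_mul_of_nonneg_right hny (abs_nonneg _)
      linarith
    rw [hrepr]
    rw [div_le_iff₀ hy0]
    linarith [hnum]
  -- lower bound
  have hlb : -( |aaux (n - 1)| + 2 * Real.log ((n:ℝ) + 1) / n)
      ≤ Real.log (Real.Gamma y) / y - Real.log y + 1 := by
    set m := n - 1 with hm
    have hmn : (m : ℝ) = (n : ℝ) - 1 := by
      have : 1 ≤ n := by omega
      push_cast [hm, this]; ring
    have hΓl : Real.Gamma ((n:ℝ)) ≤ Real.Gamma y := by
      refine hmono ?_ ?_ hny
      · exact Set.mem_Ici.2 (by linarith)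
      · exact Set.mem_Ici.2 (by linarith)
    have hcast : ((n:ℝ)) = ((m:ℝ)) + 1 := by rw [hmn]; ring
    rw [hcast, Real.Gamma_nat_eq_factorial] at hΓl
    have hlogl : Real.log (m !) ≤ Real.log (Real.Gamma y) :=
      Real.log_le_log (by exact_mod_cast m.factorial_pos) hΓl
    have hx1 : y * Real.log y - y ≤ ((n:ℝ)+1) * Real.log ((n:ℝ)+1) - ((n:ℝ)+1) :=
      mono_xlogx hey hyn.le
    have hfm : Real.log (m !) = m * aaux m + m * Real.log m - m :=
      log_fact m (by omega)
    have hloggap : ((n:ℝ) - 1) * (Real.log ((n:ℝ)+1) - Real.log ((n:ℝ)-1)) ≤ 2 := by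
      have hpos : (0:ℝ) < ((n:ℝ)+1) / ((n:ℝ)-1) := by
        apply _root_.div_pos <;> linarith
      have h1 := Real.log_le_sub_one_of_pos hpos
      rw [Real.log_div (by linarith) (by linarith)] at h1
      have hne : (n:ℝ) - 1 ≠ 0 := by linarith
      have h2 : ((n:ℝ)+1)/((n:ℝ)-1) - 1 = 2 / ((n:ℝ)-1) := by
        field_simp
        norm_num
      rw [h2] at h1
      have h3 : (0:ℝ) < (n:ℝ) - 1 := by linarith
      calc ((n:ℝ) - 1) * (Real.log ((n:ℝ)+1) - Real.log ((n:ℝ)-1))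
          ≤ ((n:ℝ) - 1) * (2 / ((n:ℝ)-1)) := by
            exact mul_le_mul_of_nonneg_left h1 h3.le
        _ = 2 := by field_simp
    have hL : (0:ℝ) ≤ Real.log ((n:ℝ)+1) := Real.log_nonneg (by linarith)
    have habs : -((m:ℝ) * |aaux m|) ≤ (m:ℝ) * aaux m := by
      have := neg_abs_le (aaux m)
      nlinarith [hmn, (by linarith : (0:ℝ) ≤ (m:ℝ))]
    have hnum : -(y * |aaux m|) - 2 * Real.log ((n:ℝ)+1)
        ≤ Real.log (Real.Gamma y) - (y * Real.log y - y) := by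
      have hmy : (m:ℝ) ≤ y := by rw [hmn]; linarith
      have h4 : -(y * |aaux m|) ≤ -((m:ℝ) * |aaux m|) := by
        have := mul_le_mul_of_nonneg_right hmy (abs_nonneg (aaux m))
        linarith
      -- log m! - ((n+1)log(n+1) - (n+1)) ≥ m * aaux m - 2 log(n+1)
      have h5 : (m:ℝ) * Real.log m - m - (((n:ℝ)+1) * Real.log ((n:ℝ)+1) - ((n:ℝ)+1))
          ≥ -(2 * Real.log ((n:ℝ)+1)) := by
        rw [hmn]
        nlinarith [hloggap]
      linarith
    rw [hrepr, le_div_iff₀ hy0]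
    have hdivn : 2 * Real.log ((n:ℝ)+1) / n * y ≥ 2 * Real.log ((n:ℝ)+1) := by
      rw [ge_iff_le, div_mul_eq_mul_div, le_div_iff₀ hn0]
      nlinarith
    have hexp : -(|aaux m| + 2 * Real.log ((n:ℝ)+1) / n) * y
        = -(y * |aaux m|) - 2 * Real.log ((n:ℝ)+1) / n * y := by ring
    rw [hexp]
    linarith
  exact ⟨n, hn3, hny, hyn, hy0, hlb, hub⟩

lemma logGamma_asymp :
    Tendsto (fun y : ℝ => Real.log (Real.Gamma y) / y - Real.log y + 1) atTop (nhds 0) := by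
  -- bounding sequences
  have hfloor : Tendsto (fun y : ℝ => ⌊y⌋₊) atTop atTop := tendsto_nat_floor_atTop
  have hupper : Tendsto (fun y : ℝ => |aaux ⌊y⌋₊|) atTop (nhds 0) := by
    have := (aaux_tendsto.comp hfloor).abs
    simpa using this
  have hlog1 : Tendsto (fun x : ℝ => Real.log (x + 1) / x) atTop (nhds 0) := by
    have h1 : Tendsto (fun x : ℝ => Real.log (x + 1) / (x + 1)) atTop (nhds 0) :=
      Real.isLittleO_log_id_atTop.tendsto_div_nhds_zero.comp
        (tendsto_atTop_add_const_right _ 1 tendsto_id)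
    have h2 : Tendsto (fun x : ℝ => (x + 1) / x) atTop (nhds 1) := by
      have h3 : Tendsto (fun x : ℝ => 1 + x⁻¹) atTop (nhds (1 + 0)) :=
        tendsto_const_nhds.add tendsto_inv_atTop_zero
      rw [add_zero] at h3
      apply h3.congr'
      filter_upwards [eventually_gt_atTop 0] with x hx
      field_simp
    have := h1.mul h2
    rw [zero_mul] at this
    apply this.congr'
    filter_upwards [eventually_gt_atTop 0] with x hx
    field_simp
  -- lower bounding sequence
  set b : ℕ → ℝ := fun n => |aaux (n - 1)| + 2 * Real.log ((n : ℝ) + 1) / n with hb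
  have hbt : Tendsto b atTop (nhds 0) := by
    have h1 : Tendsto (fun n : ℕ => |aaux (n - 1)|) atTop (nhds 0) := by
      have := (aaux_tendsto.comp (tendsto_sub_atTop_nat 1)).abs
      simpa using this
    have h2 : Tendsto (fun n : ℕ => 2 * (Real.log ((n : ℝ) + 1) / n)) atTop (nhds (2 * 0)) :=
      (hlog1.comp tendsto_natCast_atTop_atTop).const_mul 2
    have h3 := h1.add h2
    rw [mul_zero, add_zero] at h3
    apply h3.congr
    intro n; simp [hb]; ring
  have hlower : Tendsto (fun y : ℝ => -(b ⌊y⌋₊)) atTop (nhds 0) := by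
    have := (hbt.comp hfloor).neg
    simpa using this
  refine tendsto_of_tendsto_of_tendsto_of_le_of_le' hlower hupper ?_ ?_
  · -- lower bound
    filter_upwards [eventually_ge_atTop 3] with y hy
    obtain ⟨n, hn3, hny, hyn, hy0, key⟩ := bound_setup y hy
    exact key.1
  · filter_upwards [eventually_ge_atTop 3] with y hy
    obtain ⟨n, hn3, hny, hyn, hy0, key⟩ := bound_setup y hy
    exact key.2


lemma ht_tendsto (t : ℕ) :
    Tendsto (fun N : ℕ => Real.log (Real.Gamma (((N:ℝ) - t)/2)) / N
        - (((N:ℝ) - t)/(2*N)) * Real.log N) atTop (nhds (-(Real.log 2 + 1)/2)) := by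
  have hN0 : Tendsto (fun N : ℕ => 1/(N:ℝ)) atTop (nhds 0) :=
    tendsto_one_div_atTop_nhds_zero_nat
  have hu : Tendsto (fun N : ℕ => ((N:ℝ) - t)/(2*N)) atTop (nhds (1/2)) := by
    have h1 : Tendsto (fun N : ℕ => 1/2 - (t:ℝ)/2 * (1/(N:ℝ))) atTop
        (nhds (1/2 - (t:ℝ)/2 * 0)) := tendsto_const_nhds.sub (hN0.const_mul _)
    rw [mul_zero, sub_zero] at h1
    apply h1.congr'
    filter_upwards [eventually_ge_atTop 1] with N hN
    have : ((N:ℝ)) ≠ 0 := by positivity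
    field_simp
  have hyt : Tendsto (fun N : ℕ => ((N:ℝ) - t)/2) atTop atTop := by
    apply Tendsto.atTop_div_const (by norm_num : (0:ℝ) < 2)
    apply tendsto_atTop_add_const_right atTop (-(t:ℝ))
    exact tendsto_natCast_atTop_atTop
  have hf : Tendsto (fun N : ℕ => Real.log (Real.Gamma (((N:ℝ) - t)/2)) / (((N:ℝ) - t)/2)
      - Real.log (((N:ℝ) - t)/2) + 1) atTop (nhds 0) := logGamma_asymp.comp hyt
  have hr : Tendsto (fun N : ℕ => Real.log (((N:ℝ) - t)/N)) atTop (nhds 0) := by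
    have h1 : Tendsto (fun N : ℕ => 1 - (t:ℝ) * (1/(N:ℝ))) atTop (nhds (1 - (t:ℝ) * 0)) :=
      tendsto_const_nhds.sub (hN0.const_mul _)
    rw [mul_zero, sub_zero] at h1
    have h2 := h1.log one_ne_zero
    rw [Real.log_one] at h2
    apply h2.congr'
    filter_upwards [eventually_ge_atTop 1] with N hN
    have : ((N:ℝ)) ≠ 0 := by positivity
    congr 1
    field_simp
  have hE := ((hu.mul hf).add (hu.mul (hr.sub_const (Real.log 2)))).sub hu
  rw [mul_zero, zero_add, zero_sub] at hE
  have hval : (1:ℝ)/2 * -(Real.log 2) - 1/2 = -(Real.log 2 + 1)/2 := by ring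
  rw [hval] at hE
  apply hE.congr'
  filter_upwards [eventually_ge_atTop (t+1)] with N hN
  have hNt : (0:ℝ) < (N:ℝ) - t := by
    have : (t:ℝ) + 1 ≤ (N:ℝ) := by exact_mod_cast hN
    linarith
  have hN0' : (0:ℝ) < (N:ℝ) := by
    have : (0:ℝ) ≤ (t:ℝ) := by positivity
    linarith
  rw [Real.log_div hNt.ne' (by norm_num : (2:ℝ) ≠ 0),
    Real.log_div hNt.ne' hN0'.ne']
  field_simp
  ring


/-- The normalizing term of the invariant log-likelihood in the dynamic panel data
model converges, as `N → ∞` with `T` fixed, to `ln(2)/(2T) + (T-1)/(2T)`. -/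
theorem panel_normalizing_limit (T : ℕ) (hT : 1 ≤ T) :
    Tendsto
      (fun N : ℕ => (1 / ((N : ℝ) * (T : ℝ))) *
        Real.log ((2 : ℝ) ^ (((N : ℝ) - 2) / 2) *
            (N : ℝ) ^ ((N : ℝ) * (T : ℝ) / 2 - ((N : ℝ) - 2) / 2) /
          ((2 : ℝ) ^ ((N : ℝ) * (T : ℝ) / 2 - ((N : ℝ) - 2) / 2) *
            Real.pi ^ ((T : ℝ) * ((T : ℝ) - 1) / 4) *
            ∏ t ∈ Finset.Icc 1 (T - 1), Real.Gamma (((N : ℝ) - (t : ℝ)) / 2))))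
      atTop (nhds (Real.log 2 / (2 * (T : ℝ)) + ((T : ℝ) - 1) / (2 * (T : ℝ)))) := by
  have hT0 : ((T:ℝ)) ≠ 0 := by positivity
  have hN0 : Tendsto (fun N : ℕ => 1/(N:ℝ)) atTop (nhds 0) :=
    tendsto_one_div_atTop_nhds_zero_nat
  have hlogN : Tendsto (fun N : ℕ => Real.log N / N) atTop (nhds 0) :=
    Real.isLittleO_log_id_atTop.tendsto_div_nhds_zero.comp tendsto_natCast_atTop_atTop
  -- the decomposed function
  have hA : Tendsto (fun N : ℕ => (((N:ℝ) - 2)/N - (T:ℝ)/2) * Real.log 2) atTop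
      (nhds ((1 - (T:ℝ)/2) * Real.log 2)) := by
    apply Tendsto.mul_const
    have h1 : Tendsto (fun N : ℕ => 1 - 2 * (1/(N:ℝ)) - (T:ℝ)/2) atTop
        (nhds (1 - 2 * 0 - (T:ℝ)/2)) := (tendsto_const_nhds.sub (hN0.const_mul _)).sub
          tendsto_const_nhds
    rw [mul_zero, sub_zero] at h1
    apply h1.congr'
    filter_upwards [eventually_ge_atTop 1] with N hN
    have : ((N:ℝ)) ≠ 0 := by positivity
    field_simp
  have hB : Tendsto (fun N : ℕ => ((1 + (T:ℝ)*((T:ℝ)-1)/4) / N) * Real.log N) atTop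
      (nhds 0) := by
    have h1 := hlogN.const_mul (1 + (T:ℝ)*((T:ℝ)-1)/4)
    rw [mul_zero] at h1
    apply h1.congr
    intro N
    ring
  have hC : Tendsto (fun N : ℕ => ((T:ℝ)*((T:ℝ)-1)/(4*(N:ℝ))) * Real.log π) atTop
      (nhds 0) := by
    have h1 := (hN0.const_mul ((T:ℝ)*((T:ℝ)-1)/4 * Real.log π))
    rw [mul_zero] at h1
    apply h1.congr
    intro N
    ring
  have hSum : Tendsto (fun N : ℕ => ∑ t ∈ Finset.Icc 1 (T-1),
      (Real.log (Real.Gamma (((N:ℝ) - t)/2)) / N - (((N:ℝ) - t)/(2*N)) * Real.log N))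
      atTop (nhds (((T:ℝ) - 1) * (-(Real.log 2 + 1)/2))) := by
    have h1 := tendsto_finset_sum (Finset.Icc 1 (T-1))
      (fun t _ => ht_tendsto t)
    have h2 : ∑ _t ∈ Finset.Icc 1 (T-1), (-(Real.log 2 + 1)/2)
        = ((T:ℝ) - 1) * (-(Real.log 2 + 1)/2) := by
      rw [Finset.sum_const, Nat.card_Icc]
      have : (T - 1 + 1 - 1) = T - 1 := by omega
      rw [this, nsmul_eq_mul]
      congr 1
      push_cast [hT]
      ring
    rwa [h2] at h1
  have hF := ((((hA.add hB).sub hC).sub hSum)).const_mul (1/(T:ℝ))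
  have hval : 1/(T:ℝ) * ((1 - (T:ℝ)/2) * Real.log 2 + 0 - 0
      - ((T:ℝ) - 1) * (-(Real.log 2 + 1)/2))
      = Real.log 2 / (2 * (T:ℝ)) + ((T:ℝ) - 1) / (2 * (T:ℝ)) := by
    field_simp
    ring
  rw [hval] at hF
  apply hF.congr'
  -- eventual equality
  filter_upwards [eventually_ge_atTop (T+2)] with N hN
  have hNR : (T:ℝ) + 2 ≤ (N:ℝ) := by exact_mod_cast hN
  have hTR : (1:ℝ) ≤ (T:ℝ) := by exact_mod_cast hT
  have hN0' : (0:ℝ) < (N:ℝ) := by linarith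
  have hΓpos : ∀ t ∈ Finset.Icc 1 (T-1), (0:ℝ) < Real.Gamma (((N:ℝ) - t)/2) := by
    intro t ht
    have ht' : (t:ℝ) ≤ (T:ℝ) - 1 := by
      have := (Finset.mem_Icc.1 ht).2
      have : (t:ℝ) ≤ ((T-1:ℕ):ℝ) := by exact_mod_cast this
      calc (t:ℝ) ≤ ((T-1:ℕ):ℝ) := this
        _ ≤ (T:ℝ) - 1 := by push_cast [hT]; ring_nf; exact le_refl _
    exact Real.Gamma_pos_of_pos (by linarith)
  have hProd : (0:ℝ) < ∏ t ∈ Finset.Icc 1 (T-1), Real.Gamma (((N:ℝ) - t)/2) :=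
    Finset.prod_pos hΓpos
  have h2p : (0:ℝ) < (2:ℝ) := by norm_num
  have hpip : (0:ℝ) < π := Real.pi_pos
  have hden : (0:ℝ) < (2:ℝ) ^ ((N:ℝ)*(T:ℝ)/2 - ((N:ℝ)-2)/2) *
      π ^ ((T:ℝ)*((T:ℝ)-1)/4) *
      ∏ t ∈ Finset.Icc 1 (T-1), Real.Gamma (((N:ℝ) - t)/2) := by
    have := Real.rpow_pos_of_pos h2p ((N:ℝ)*(T:ℝ)/2 - ((N:ℝ)-2)/2)
    have := Real.rpow_pos_of_pos hpip ((T:ℝ)*((T:ℝ)-1)/4)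
    positivity
  have hnum : (0:ℝ) < (2:ℝ) ^ (((N:ℝ)-2)/2) * (N:ℝ) ^ ((N:ℝ)*(T:ℝ)/2 - ((N:ℝ)-2)/2) := by
    have := Real.rpow_pos_of_pos h2p (((N:ℝ)-2)/2)
    have := Real.rpow_pos_of_pos hN0' ((N:ℝ)*(T:ℝ)/2 - ((N:ℝ)-2)/2)
    positivity
  rw [Real.log_div hnum.ne' hden.ne',
    Real.log_mul (Real.rpow_pos_of_pos h2p _).ne' (Real.rpow_pos_of_pos hN0' _).ne',
    Real.log_mul (by positivity : ((2:ℝ) ^ ((N:ℝ)*(T:ℝ)/2 - ((N:ℝ)-2)/2) *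
      π ^ ((T:ℝ)*((T:ℝ)-1)/4)) ≠ 0) hProd.ne',
    Real.log_mul (Real.rpow_pos_of_pos h2p _).ne' (Real.rpow_pos_of_pos hpip _).ne',
    Real.log_rpow h2p, Real.log_rpow hN0', Real.log_rpow h2p, Real.log_rpow hpip,
    Real.log_prod (fun t ht => (hΓpos t ht).ne')]
  -- sum identities
  have hsplit : ∑ t ∈ Finset.Icc 1 (T-1),
      (Real.log (Real.Gamma (((N:ℝ) - t)/2)) / N - (((N:ℝ) - t)/(2*N)) * Real.log N)
      = (∑ t ∈ Finset.Icc 1 (T-1), Real.log (Real.Gamma (((N:ℝ) - t)/2))) / N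
        - (∑ t ∈ Finset.Icc 1 (T-1), ((N:ℝ) - t)) * (Real.log N / (2*N)) := by
    rw [Finset.sum_sub_distrib, Finset.sum_div, Finset.sum_mul]
    congr 1
    apply Finset.sum_congr rfl
    intro t _
    ring
  have hgauss : (∑ t ∈ Finset.Icc 1 (T-1), (t:ℝ)) = (T:ℝ) * ((T:ℝ)-1) / 2 := by
    have h1 : ∑ t ∈ Finset.Icc 1 (T-1), (t:ℝ) = ∑ t ∈ Finset.range T, (t:ℝ) := by
      apply Finset.sum_subset
      · intro x hx
        simp only [Finset.mem_Icc] at hx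
        simp only [Finset.mem_range]
        omega
      · intro x hx hnx
        simp only [Finset.mem_range] at hx
        simp only [Finset.mem_Icc] at hnx
        have : x = 0 := by omega
        simp [this]
    rw [h1]
    have h2 := Finset.sum_range_id_mul_two T
    have h3 : ((∑ i ∈ Finset.range T, i : ℕ) : ℝ) * 2 = (T:ℝ) * (((T-1:ℕ)):ℝ) := by
      exact_mod_cast congrArg (Nat.cast (R := ℝ)) h2
    push_cast [hT] at h3 ⊢
    linarith
  have hsum1 : (∑ t ∈ Finset.Icc 1 (T-1), ((N:ℝ) - t))
      = ((T:ℝ)-1) * N - (T:ℝ)*((T:ℝ)-1)/2 := by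
    rw [Finset.sum_sub_distrib, Finset.sum_const, Nat.card_Icc, hgauss]
    have hc : (T - 1 + 1 - 1) = T - 1 := by omega
    rw [hc, nsmul_eq_mul]
    push_cast [hT]
    ring
  rw [hsplit, hsum1]
  field_simp
  ring
end
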